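/- On ℝ² with coordinates (u, v) and ℝⁿ with coordinates x, the metric g = 2du dv − 2(sin(v) − ∑ᵢ aᵢ(cos(xᵢ) − 1)) du² + ∑ᵢ dxᵢ² on ℝ^{n+2} is 2π-periodic in all coordinates and descends to the torus 𝕋^{n+2} = ℝ^{n+2}/2πℤ^{n+2}; the curve γ̃(t) = (ln t, 0, …, 0), t ∈ (0, ∞), is an inextensible geodesic of g on ℝ^{n+2}, so the induced compact Lorentzian manifold (𝕋^{n+2}, g) is geodesically incomplete. -/

import Mathlib

open scoped BigOperators

noncomputable def pd {m : ℕ} (i : Fin m) (f : (Fin m → ℝ) → ℝ) (x : Fin m → ℝ) : ℝ :=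
  fderiv ℝ f x (Pi.single i 1)

noncomputable def christoffel {m : ℕ} (g : (Fin m → ℝ) → Matrix (Fin m) (Fin m) ℝ)
    (x : Fin m → ℝ) (k i j : Fin m) : ℝ :=
  (1 / 2) * ∑ l : Fin m, (g x)⁻¹ k l *
    (pd i (fun y => g y l j) x + pd j (fun y => g y l i) x - pd l (fun y => g y i j) x)

def IsGeodesicOn {m : ℕ} (g : (Fin m → ℝ) → Matrix (Fin m) (Fin m) ℝ)
    (γ : ℝ → Fin m → ℝ) (s : Set ℝ) : Prop :=
  ContDiffOn ℝ 2 γ s ∧ ∀ t ∈ s, ∀ k : Fin m,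
    deriv (deriv γ) t k =
      -∑ i : Fin m, ∑ j : Fin m, christoffel g (γ t) k i j * deriv γ t i * deriv γ t j

/-- The metric `g = 2 du dv − 2(sin v − ∑ aᵢ(cos xᵢ − 1)) du² + ∑ dxᵢ²` on `ℝ^{n+2}`,
with coordinates `p 0 = u`, `p 1 = v`, `p (i+2) = xᵢ`. -/
noncomputable def cpMetric {n : ℕ} (a : Fin n → ℝ)
    (p : Fin (n + 2) → ℝ) : Matrix (Fin (n + 2)) (Fin (n + 2)) ℝ :=
  Matrix.of fun i j =>
    if i = 0 ∧ j = 0 then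
      -2 * (Real.sin (p 1) - ∑ k : Fin n, a k * (Real.cos (p k.succ.succ) - 1))
    else if (i = 0 ∧ j = 1) ∨ (i = 1 ∧ j = 0) then 1
    else if i = j ∧ i ≠ 0 ∧ i ≠ 1 then 1 else 0

/-- The curve `γ̃(t) = (ln t, 0, …, 0)`. -/
noncomputable def logCurve {n : ℕ} (t : ℝ) : Fin (n + 2) → ℝ := fun k =>
  if k = 0 then Real.log t else 0

/-! ### Auxiliary lemmas -/

lemma pd_const {m : ℕ} (i : Fin m) (c : ℝ) (x : Fin m → ℝ) : pd i (fun _ => c) x = 0 := by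
  simp [pd]

lemma fin_one_ne_zero (n : ℕ) : (1 : Fin (n+2)) ≠ 0 := by simp [Fin.ext_iff]

lemma logCurve_one {n : ℕ} (t : ℝ) : logCurve (n := n) t 1 = 0 := by
  simp [logCurve, fin_one_ne_zero]

lemma logCurve_ss {n : ℕ} (t : ℝ) (k : Fin n) : logCurve (n := n) t k.succ.succ = 0 := by
  simp [logCurve, Fin.succ_ne_zero]

noncomputable def Hf {n : ℕ} (a : Fin n → ℝ) : (Fin (n+2) → ℝ) → ℝ :=
  fun y => -2 * (Real.sin (y 1) - ∑ k : Fin n, a k * (Real.cos (y (k.succ.succ)) - 1))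

lemma hasFDerivAt_Hf {n : ℕ} (a : Fin n → ℝ) (p : Fin (n+2) → ℝ)
    (h1 : p 1 = 0) (h2 : ∀ k : Fin n, p k.succ.succ = 0) :
    HasFDerivAt (Hf a)
      ((-2:ℝ) • (ContinuousLinearMap.proj 1 : (Fin (n+2) → ℝ) →L[ℝ] ℝ)) p := by
  have hs : HasFDerivAt (fun y : Fin (n+2) → ℝ => Real.sin (y 1))
      (ContinuousLinearMap.proj 1 : (Fin (n+2) → ℝ) →L[ℝ] ℝ) p := by
    have := (Real.hasDerivAt_sin (p 1)).comp_hasFDerivAt p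
      (ContinuousLinearMap.proj (1 : Fin (n+2)) :
        (Fin (n+2) → ℝ) →L[ℝ] ℝ).hasFDerivAt
    simp [h1] at this
    exact this
  have hc : ∀ k : Fin n, HasFDerivAt
      (fun y : Fin (n+2) → ℝ => a k * (Real.cos (y k.succ.succ) - 1))
      (0 : (Fin (n+2) → ℝ) →L[ℝ] ℝ) p := by
    intro k
    have h := (((Real.hasDerivAt_cos (p k.succ.succ)).comp_hasFDerivAt p
      (ContinuousLinearMap.proj (k.succ.succ) :
        (Fin (n+2) → ℝ) →L[ℝ] ℝ).hasFDerivAt).sub_const 1).const_mul (a k)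
    simpa [h2 k, Function.comp] using h
  have hsum : HasFDerivAt
      (fun y : Fin (n+2) → ℝ => ∑ k : Fin n, a k * (Real.cos (y k.succ.succ) - 1))
      (0 : (Fin (n+2) → ℝ) →L[ℝ] ℝ) p := by
    have := HasFDerivAt.fun_sum (u := Finset.univ) (fun k _ => hc k)
    simpa using this
  have h := (hs.sub hsum).const_mul (-2 : ℝ)
  rw [sub_zero] at h
  exact h

lemma pd_Hf {n : ℕ} (a : Fin n → ℝ) (i : Fin (n+2)) (p : Fin (n+2) → ℝ)
    (h1 : p 1 = 0) (h2 : ∀ k : Fin n, p k.succ.succ = 0) :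
    pd i (Hf a) p = if i = 1 then -2 else 0 := by
  rw [pd, (hasFDerivAt_Hf a p h1 h2).fderiv]
  by_cases hi : i = 1 <;>
    simp [hi, Pi.single_apply, eq_comm]

def sw {n : ℕ} : Fin (n+2) → Fin (n+2) := fun i => if i = 0 then 1 else if i = 1 then 0 else i

lemma sw_sw {n : ℕ} (i : Fin (n+2)) : sw (sw i) = i := by
  by_cases h0 : i = 0
  · simp [sw, h0, fin_one_ne_zero]
  · by_cases h1 : i = 1
    · simp [sw, h0, h1]
    · simp [sw, h0, h1]

lemma sw_eq_one_iff {n : ℕ} (i : Fin (n+2)) : sw i = 1 ↔ i = 0 := by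
  by_cases h0 : i = 0
  · simp [sw, h0]
  · by_cases h1 : i = 1
    · simp [sw, h0, h1, (fin_one_ne_zero n).symm]
    · simp [sw, h0, h1]

lemma cpM_apply {n : ℕ} (a : Fin n → ℝ) (t : ℝ) (i l : Fin (n+2)) :
    cpMetric a (logCurve (n := n) t) i l = if l = sw i then 1 else 0 := by
  by_cases h0 : i = 0
  · by_cases hl : l = 0
    · simp [cpMetric, sw, h0, hl, logCurve_one, logCurve_ss, (fin_one_ne_zero n).symm]
    · by_cases hl1 : l = 1
      · simp [cpMetric, sw, h0, hl, hl1]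
      · simp [cpMetric, sw, h0, hl, hl1, Ne.symm hl1]
  · by_cases h1 : i = 1
    · by_cases hl : l = 0
      · simp [cpMetric, sw, h0, h1, hl]
      · simp [cpMetric, sw, h0, h1, hl, Ne.symm hl, fin_one_ne_zero]
    · by_cases hl : l = i
      · simp [cpMetric, sw, h0, h1, hl, Ne.symm h0, Ne.symm h1]
      · simp [cpMetric, sw, h0, h1, hl, Ne.symm hl]

lemma cpM_inv {n : ℕ} (a : Fin n → ℝ) (t : ℝ) :
    (cpMetric a (logCurve (n := n) t))⁻¹ = cpMetric a (logCurve (n := n) t) := by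
  apply Matrix.inv_eq_right_inv
  ext i j
  rw [Matrix.mul_apply]
  simp only [cpM_apply, ite_mul, one_mul, zero_mul]
  rw [Finset.sum_ite_eq' Finset.univ (sw i) (fun l => if j = sw l then (1:ℝ) else 0)]
  simp [sw_sw, Matrix.one_apply, eq_comm]

lemma entry_zero_zero {n : ℕ} (a : Fin n → ℝ) :
    (fun y => cpMetric a y 0 0) = Hf a := by
  funext y
  simp [cpMetric, Hf]

lemma pd_entry_l0 {n : ℕ} (a : Fin n → ℝ) (t : ℝ) (l : Fin (n+2)) :
    pd 0 (fun y => cpMetric a y l 0) (logCurve (n := n) t) = 0 := by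
  by_cases hl0 : l = 0
  · subst hl0
    rw [entry_zero_zero, pd_Hf a 0 _ (logCurve_one t) (logCurve_ss t)]
    simp [(fin_one_ne_zero n).symm]
  · by_cases hl1 : l = 1
    · have : (fun y => cpMetric a y l 0) = fun _ => (1:ℝ) := by
        funext y; simp [cpMetric, hl0, hl1]
      rw [this, pd_const]
    · have : (fun y => cpMetric a y l 0) = fun _ => (0:ℝ) := by
        funext y; simp [cpMetric, hl0, hl1]
      rw [this, pd_const]

lemma christoffel_logCurve {n : ℕ} (a : Fin n → ℝ) (t : ℝ) (k : Fin (n+2)) :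
    christoffel (cpMetric a) (logCurve (n := n) t) k 0 0 = if k = 0 then 1 else 0 := by
  rw [christoffel, cpM_inv]
  have hstep : ∀ l : Fin (n+2),
      cpMetric a (logCurve (n := n) t) k l *
        (pd 0 (fun y => cpMetric a y l 0) (logCurve (n := n) t)
          + pd 0 (fun y => cpMetric a y l 0) (logCurve (n := n) t)
          - pd l (fun y => cpMetric a y 0 0) (logCurve (n := n) t)) =
      (if l = sw k then 1 else 0) * (if l = 1 then 2 else 0) := by
    intro l
    rw [cpM_apply, pd_entry_l0, entry_zero_zero,
      pd_Hf a l _ (logCurve_one t) (logCurve_ss t)]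
    by_cases hl : l = 1 <;> simp [hl]
  rw [Finset.sum_congr rfl (fun l _ => hstep l)]
  simp only [ite_mul, one_mul, zero_mul]
  rw [Finset.sum_ite_eq' Finset.univ (sw k) (fun l => if l = 1 then (2:ℝ) else 0)]
  rw [if_pos (Finset.mem_univ _)]
  by_cases hk : k = 0
  · rw [if_pos ((sw_eq_one_iff k).mpr hk), if_pos hk]; norm_num
  · rw [if_neg (fun h => hk ((sw_eq_one_iff k).mp h)), if_neg hk, mul_zero]

lemma deriv_logCurve {n : ℕ} {s : ℝ} (hs : s ≠ 0) :
    deriv (logCurve (n := n)) s = fun k => if k = 0 then s⁻¹ else 0 := by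
  have h : HasDerivAt (logCurve (n := n)) (fun k => if k = 0 then s⁻¹ else 0) s := by
    rw [hasDerivAt_pi]
    intro k
    by_cases hk : k = 0
    · simpa [logCurve, hk] using Real.hasDerivAt_log hs
    · simpa [logCurve, hk] using hasDerivAt_const s (0:ℝ)
  exact h.deriv

lemma deriv2_logCurve {n : ℕ} {t : ℝ} (ht : 0 < t) :
    deriv (deriv (logCurve (n := n))) t = fun k => if k = 0 then -(t^2)⁻¹ else 0 := by
  have hev : deriv (logCurve (n := n)) =ᶠ[nhds t]
      (fun s => fun k : Fin (n+2) => if k = 0 then s⁻¹ else 0) := by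
    filter_upwards [eventually_ne_nhds ht.ne'] with s hs using deriv_logCurve hs
  rw [hev.deriv_eq]
  have h : HasDerivAt (fun s => fun k : Fin (n+2) => if k = 0 then s⁻¹ else 0)
      (fun k => if k = 0 then -(t^2)⁻¹ else 0) t := by
    rw [hasDerivAt_pi]
    intro k
    by_cases hk : k = 0
    · simpa [hk] using hasDerivAt_inv ht.ne'
    · simpa [hk] using hasDerivAt_const t (0:ℝ)
  exact h.deriv

/-- The metric `g` is `2π`-periodic in all coordinates (so it descends
to the torus `𝕋^{n+2}`), the curve `γ̃(t) = (ln t, 0, …, 0)` is a geodesic on `(0,∞)`,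
and it admits no extension to a complete geodesic, even modulo the deck group
`2πℤ^{n+2}`: the induced compact Lorentzian manifold is geodesically incomplete. -/
theorem stmt_17 (n : ℕ) (a : Fin n → ℝ) :
    (∀ (p : Fin (n + 2) → ℝ) (z : Fin (n + 2) → ℤ),
      cpMetric a (fun k => p k + 2 * Real.pi * (z k : ℝ)) = cpMetric a p) ∧
    IsGeodesicOn (cpMetric a) (logCurve (n := n)) (Set.Ioi 0) ∧
    ¬ ∃ (δ : ℝ → Fin (n + 2) → ℝ) (z : Fin (n + 2) → ℤ),
        IsGeodesicOn (cpMetric a) δ Set.univ ∧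
        ∀ t ∈ Set.Ioi (0 : ℝ), δ t = fun k => logCurve (n := n) t k + 2 * Real.pi * (z k : ℝ) := by
  refine ⟨?_, ⟨?_, ?_⟩, ?_⟩
  · -- periodicity
    intro p z
    have hper : ∀ k : Fin (n+2), Real.sin (p k + 2 * Real.pi * (z k : ℝ)) = Real.sin (p k)
        ∧ Real.cos (p k + 2 * Real.pi * (z k : ℝ)) = Real.cos (p k) := by
      intro k
      constructor
      · rw [show p k + 2 * Real.pi * (z k : ℝ) = p k + (z k : ℝ) * (2 * Real.pi) by ring,
          Real.sin_add_int_mul_two_pi]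
      · rw [show p k + 2 * Real.pi * (z k : ℝ) = p k + (z k : ℝ) * (2 * Real.pi) by ring,
          Real.cos_add_int_mul_two_pi]
    ext i j
    by_cases h : i = 0 ∧ j = 0
    · simp only [cpMetric, Matrix.of_apply, if_pos h, (hper 1).1]
      congr 2
      exact Finset.sum_congr rfl fun k _ => by rw [(hper k.succ.succ).2]
    · simp [cpMetric, h]
  · -- smoothness
    rw [contDiffOn_pi]
    intro k
    by_cases hk : k = 0
    · simp only [logCurve, hk, if_true]
      exact (Real.contDiffOn_log.mono (fun x hx => ne_of_gt hx)).of_le le_top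
    · simp only [logCurve, hk, if_false]
      exact contDiffOn_const
  · -- geodesic equation
    intro t ht k
    have ht' : (0:ℝ) < t := ht
    rw [deriv2_logCurve ht', deriv_logCurve ht'.ne']
    have hsum : ∑ i : Fin (n+2), ∑ j : Fin (n+2),
        christoffel (cpMetric a) (logCurve (n := n) t) k i j *
          (if i = 0 then t⁻¹ else 0) * (if j = 0 then t⁻¹ else 0) =
        christoffel (cpMetric a) (logCurve (n := n) t) k 0 0 * t⁻¹ * t⁻¹ := by
      rw [Finset.sum_eq_single 0]
      · rw [Finset.sum_eq_single 0]
        · simp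
        · intro j _ hj; simp [hj]
        · simp
      · intro i _ hi; simp [hi]
      · simp
    rw [hsum, christoffel_logCurve]
    by_cases hk : k = 0
    · simp only [hk, if_true]
      field_simp
    · simp [hk]
  · -- incompleteness
    rintro ⟨δ, z, ⟨hsm, -⟩, hagree⟩
    have hcont : Continuous fun t => δ t 0 := by
      have hδ : Continuous δ := by
        rw [← continuousOn_univ]
        exact hsm.continuousOn
      exact (continuous_apply (0 : Fin (n+2))).comp hδ
    have h1 : Filter.Tendsto (fun t => δ t 0) (nhdsWithin 0 (Set.Ioi 0)) (nhds (δ 0 0)) :=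
      (hcont.tendsto 0).mono_left nhdsWithin_le_nhds
    have h2 : Filter.Tendsto (fun t => δ t 0) (nhdsWithin 0 (Set.Ioi 0)) Filter.atBot := by
      have hlog : Filter.Tendsto (fun t => Real.log t + 2 * Real.pi * (z 0 : ℝ))
          (nhdsWithin 0 (Set.Ioi 0)) Filter.atBot :=
        Filter.tendsto_atBot_add_const_right _ _ Real.tendsto_log_nhdsGT_zero
      refine hlog.congr' ?_
      filter_upwards [self_mem_nhdsWithin] with t ht
      have := hagree t ht
      rw [this]
      simp [logCurve]
    exact not_tendsto_nhds_of_tendsto_atBot h2 _ h1
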